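/- Let (X, μ) be a finite measure space, C > 0, and δ > 0. Let (f_k) be a sequence of measurable functions on X with 0 ≤ f_k ≤ C μ-a.e., and let f be measurable with 0 ≤ f ≤ C μ-a.e. Assume that for every g ∈ L¹(μ), ∫_X f_k g dμ → ∫_X f g dμ as k → ∞. If μ({x : f(x) ≥ 1 + 2δ}) > 0, then liminf_{k→∞} μ({x : f_k(x) ≥ 1 + δ}) > 0. -/

import Mathlib

open MeasureTheory Filter Topology

/-- On a finite measure space, if `0 ≤ f_k ≤ C` a.e., `0 ≤ f ≤ C` a.e., `f_k → f`
weak-* in `L^∞`, and `μ({f ≥ 1 + 2δ}) > 0`, then `liminf_k μ({f_k ≥ 1 + δ}) > 0`. -/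
theorem stmt_10 {X : Type*} [MeasurableSpace X] (μ : Measure X) [IsFiniteMeasure μ]
    (C : ℝ) (hC : 0 < C) (δ : ℝ) (hδ : 0 < δ)
    (f : ℕ → X → ℝ) (hf_meas : ∀ k, Measurable (f k))
    (hf_bd : ∀ k, ∀ᵐ x ∂μ, 0 ≤ f k x ∧ f k x ≤ C)
    (fl : X → ℝ) (hfl_meas : Measurable fl) (hfl_bd : ∀ᵐ x ∂μ, 0 ≤ fl x ∧ fl x ≤ C)
    (hw : ∀ g : X → ℝ, Integrable g μ →
      Tendsto (fun k => ∫ x, f k x * g x ∂μ) atTop (𝓝 (∫ x, fl x * g x ∂μ)))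
    (hpos : 0 < μ {x | 1 + 2 * δ ≤ fl x}) :
    0 < Filter.liminf (fun k => μ {x | 1 + δ ≤ f k x}) atTop := by
  classical
  set A := {x | 1 + 2 * δ ≤ fl x} with hA
  have hAmeas : MeasurableSet A := measurableSet_le measurable_const hfl_meas
  have hAfin : μ A ≠ ⊤ := measure_ne_top μ A
  set a := (μ A).toReal with ha
  have hapos : 0 < a := ENNReal.toReal_pos hpos.ne' hAfin
  have hint : ∀ k, Integrable (f k) μ := fun k =>
    (integrable_const C).mono' (hf_meas k).aestronglyMeasurable
      ((hf_bd k).mono fun x hx => by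
        rw [Real.norm_eq_abs, abs_of_nonneg hx.1]; exact hx.2)
  have hg : Integrable (A.indicator (fun _ => (1:ℝ))) μ :=
    (integrable_const 1).indicator hAmeas
  have heq : ∀ (h : X → ℝ),
      (∫ x, h x * A.indicator (fun _ => (1:ℝ)) x ∂μ) = ∫ x in A, h x ∂μ := by
    intro h
    rw [← integral_indicator hAmeas]
    congr 1; ext x
    by_cases hx : x ∈ A <;> simp [Set.indicator, hx]
  have key := hw _ hg
  simp only [heq] at key
  -- the limiting integral is large
  have hlow : (1 + 2 * δ) * a ≤ ∫ x in A, fl x ∂μ :=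
    setIntegral_ge_of_const_le_real hAmeas hAfin (fun x hx => hx)
      ((integrable_const C).mono' hfl_meas.aestronglyMeasurable
        (hfl_bd.mono fun x hx => by
          rw [Real.norm_eq_abs, abs_of_nonneg hx.1]; exact hx.2)).integrableOn
  -- eventually the integrals of f k over A are large
  have hev : ∀ᶠ k in atTop, (1 + 3 / 2 * δ) * a < ∫ x in A, f k x ∂μ := by
    apply key.eventually_const_lt
    have : (1 + 3 / 2 * δ) * a < (1 + 2 * δ) * a := by nlinarith
    exact this.trans_le hlow
  -- upper bound on each integral
  have hub : ∀ k, (∫ x in A, f k x ∂μ) ≤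
      (1 + δ) * a + C * (μ {x | 1 + δ ≤ f k x}).toReal := by
    intro k
    set B := {x | 1 + δ ≤ f k x} with hB
    have hBmeas : MeasurableSet B := measurableSet_le measurable_const (hf_meas k)
    have hbd : ∀ᵐ x ∂μ, f k x ≤ (1 + δ) + C * B.indicator (fun _ => (1:ℝ)) x := by
      filter_upwards [hf_bd k] with x hx
      by_cases hxB : x ∈ B
      · simp only [Set.indicator_of_mem hxB, mul_one]
        linarith [hx.2]
      · simp only [Set.indicator_of_notMem hxB, mul_zero, add_zero]
        exact le_of_not_ge hxB
    have hintB : Integrable (fun x => (1 + δ) + C * B.indicator (fun _ => (1:ℝ)) x) μ :=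
      (integrable_const _).add (((integrable_const 1).indicator hBmeas).const_mul C)
    calc (∫ x in A, f k x ∂μ)
        ≤ ∫ x in A, ((1 + δ) + C * B.indicator (fun _ => (1:ℝ)) x) ∂μ := by
          apply setIntegral_mono_ae (hint k).integrableOn hintB.integrableOn hbd
      _ = (1 + δ) * a + C * (μ (B ∩ A)).toReal := by
          rw [integral_add (integrable_const _).integrableOn
            (((integrable_const 1).indicator hBmeas).const_mul C).integrableOn,
            setIntegral_const, integral_const_mul]
          congr 1
          · rw [smul_eq_mul, mul_comm]; rfl
          · rw [setIntegral_indicator hBmeas]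
            simp [Set.inter_comm]; exact Or.inl rfl
      _ ≤ (1 + δ) * a + C * (μ B).toReal := by
          have h := ENNReal.toReal_mono (measure_ne_top μ B)
            (measure_mono (Set.inter_subset_left (s := B) (t := A)))
          nlinarith
  -- eventually the measure is bounded below
  have c := δ * a / (2 * C)
  have hev2 : ∀ᶠ k in atTop,
      ENNReal.ofReal (δ * a / (2 * C)) ≤ μ {x | 1 + δ ≤ f k x} := by
    filter_upwards [hev] with k hk
    have h2 : δ * a / (2 * C) ≤ (μ {x | 1 + δ ≤ f k x}).toReal := by
      have := (hk.trans_le (hub k))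
      rw [div_le_iff₀ (by positivity)]
      nlinarith
    exact ENNReal.ofReal_le_of_le_toReal h2
  have hlim : ENNReal.ofReal (δ * a / (2 * C)) ≤
      Filter.liminf (fun k => μ {x | 1 + δ ≤ f k x}) atTop :=
    le_liminf_of_le (by isBoundedDefault) hev2
  refine lt_of_lt_of_le ?_ hlim
  exact ENNReal.ofReal_pos.mpr (by positivity)
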